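/- Let m ≥ 1, let a < b be reals, and let β : [a,b] → ℝ^m be a curve with totally positive torsion. Then for any points a ≤ z₁ < z₂ < … < z_m ≤ b and any r ∈ [a,b] with r ∉ {z₁, …, z_m}, the m vectors β(z₁) − β(r), …, β(z_m) − β(r) are linearly independent in ℝ^m. -/

import Mathlib

noncomputable section

open Set Filter Topology

/-- A curve `γ : [a,b] → ℝ^d` has *totally positive torsion* if it is continuous on `[a,b]`,
`d`-times continuously differentiable on `(a,b)`, and for every `t ∈ (a,b)` all `d` leading
principal minors of the `d × d` matrix whose columns are `γ'(t), γ''(t), …, γ^{(d)}(t)`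
are positive. -/
def HasTotallyPositiveTorsion (d : ℕ) (a b : ℝ) (γ : ℝ → Fin d → ℝ) : Prop :=
  ContinuousOn γ (Set.Icc a b) ∧
  ContDiffOn ℝ d γ (Set.Ioo a b) ∧
  ∀ t ∈ Set.Ioo a b, ∀ (k : ℕ) (hk : k ≤ d), 1 ≤ k →
    0 < (Matrix.of (fun i j : Fin k =>
      iteratedDerivWithin (j.1 + 1) γ (Set.Ioo a b) t (Fin.castLE hk i))).det


lemma myIdwOpen {n : ℕ} {f : ℝ → ℝ} {s : Set ℝ} (hs : IsOpen s) {t : ℝ} (ht : t ∈ s) :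
    iteratedDerivWithin n f s t = iteratedDeriv n f t := by
  rw [iteratedDerivWithin_eq_iteratedFDerivWithin, iteratedDeriv_eq_iteratedFDeriv,
    iteratedFDerivWithin_of_isOpen n hs ht]

lemma myDiffAt {N l : ℕ} {f : ℝ → ℝ} {s : Set ℝ} (hs : IsOpen s)
    (hf : ContDiffOn ℝ N f s) (hl : l < N) {t : ℝ} (ht : t ∈ s) :
    DifferentiableAt ℝ (iteratedDeriv l f) t := by
  have h1 : DifferentiableOn ℝ (iteratedDerivWithin l f s) s :=
    hf.differentiableOn_iteratedDerivWithin (by exact_mod_cast hl) hs.uniqueDiffOn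
  have h2 : DifferentiableAt ℝ (iteratedDerivWithin l f s) t :=
    (h1 t ht).differentiableAt (hs.mem_nhds ht)
  have h3 : iteratedDerivWithin l f s =ᶠ[𝓝 t] iteratedDeriv l f := by
    filter_upwards [hs.mem_nhds ht] with x hx using myIdwOpen hs hx
  exact (Filter.EventuallyEq.differentiableAt_iff h3).mp h2

open Finset in
lemma myLeibniz {s : Set ℝ} (hs : IsOpen s) {N : ℕ} (n : ℕ) (hn : n ≤ N)
    (f g : ℝ → ℝ) (hf : ContDiffOn ℝ N f s) (hg : ContDiffOn ℝ N g s) :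
    ∀ t ∈ s, iteratedDeriv n (fun x => f x * g x) t =
      ∑ ij ∈ Finset.HasAntidiagonal.antidiagonal n,
        (n.choose ij.1 : ℝ) * (iteratedDeriv ij.1 f t * iteratedDeriv ij.2 g t) := by
  induction n with
  | zero => intro t ht; simp
  | succ n IH =>
    intro t ht
    have IH' := IH (le_trans (Nat.le_succ n) hn)
    have hev : iteratedDeriv n (fun x => f x * g x) =ᶠ[𝓝 t]
        fun x => ∑ ij ∈ Finset.HasAntidiagonal.antidiagonal n,
          (n.choose ij.1 : ℝ) * (iteratedDeriv ij.1 f x * iteratedDeriv ij.2 g x) := by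
      filter_upwards [hs.mem_nhds ht] with x hx using IH' x hx
    rw [iteratedDeriv_succ, hev.deriv_eq]
    have hterm : ∀ ij ∈ Finset.HasAntidiagonal.antidiagonal n,
        HasDerivAt (fun x => (n.choose ij.1 : ℝ) *
            (iteratedDeriv ij.1 f x * iteratedDeriv ij.2 g x))
          ((n.choose ij.1 : ℝ) * (iteratedDeriv (ij.1+1) f t * iteratedDeriv ij.2 g t
            + iteratedDeriv ij.1 f t * iteratedDeriv (ij.2+1) g t)) t := by
      intro ij hij
      have h1 : ij.1 < N := by
        have := Finset.HasAntidiagonal.antidiagonal.fst_le hij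
        omega
      have h2 : ij.2 < N := by
        have := Finset.HasAntidiagonal.antidiagonal.snd_le hij
        omega
      have hf' : HasDerivAt (iteratedDeriv ij.1 f) (iteratedDeriv (ij.1+1) f t) t := by
        rw [iteratedDeriv_succ]
        exact (myDiffAt hs hf h1 ht).hasDerivAt
      have hg' : HasDerivAt (iteratedDeriv ij.2 g) (iteratedDeriv (ij.2+1) g t) t := by
        rw [iteratedDeriv_succ]
        exact (myDiffAt hs hg h2 ht).hasDerivAt
      exact (hf'.mul hg').const_mul _
    have hsum := HasDerivAt.fun_sum hterm
    rw [hsum.deriv]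
    rw [sum_antidiagonal_choose_succ_mul
      (fun p q => iteratedDeriv p f t * iteratedDeriv q g t) n]
    have hswap : ∑ ij ∈ Finset.HasAntidiagonal.antidiagonal n,
        (n.choose ij.2 : ℝ) * (iteratedDeriv (ij.1+1) f t * iteratedDeriv ij.2 g t)
        = ∑ ij ∈ Finset.HasAntidiagonal.antidiagonal n,
        (n.choose ij.1 : ℝ) * (iteratedDeriv (ij.1+1) f t * iteratedDeriv ij.2 g t) := by
      refine Finset.sum_congr rfl fun ij hij => ?_
      rw [Finset.HasAntidiagonal.mem_antidiagonal] at hij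
      rw [show ij.2 = n - ij.1 by omega, Nat.choose_symm (by omega)]
    rw [hswap]
    rw [← Finset.sum_add_distrib]
    refine Finset.sum_congr rfl fun ij hij => ?_
    ring

lemma myIdOne (n : ℕ) (t : ℝ) :
    iteratedDeriv n (fun _ : ℝ => (1:ℝ)) t = if n = 0 then 1 else 0 := by
  induction n with
  | zero => simp
  | succ n IH =>
    rw [if_neg (Nat.succ_ne_zero n), iteratedDeriv_eq_iteratedFDeriv,
      iteratedFDeriv_const_of_ne (Nat.succ_ne_zero n)]
    rfl

open Finset in
lemma myDetMul {s : Set ℝ} (hs : IsOpen s) {N k : ℕ} (hk : k ≤ N + 1)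
    (g : ℝ → ℝ) (f : Fin k → ℝ → ℝ) (hg : ContDiffOn ℝ N g s)
    (hf : ∀ i, ContDiffOn ℝ N (f i) s) {t : ℝ} (ht : t ∈ s) :
    (Matrix.of fun i j : Fin k => iteratedDeriv (j:ℕ) (fun x => f i x * g x) t).det
      = g t ^ k * (Matrix.of fun i j : Fin k => iteratedDeriv (j:ℕ) (f i) t).det := by
  classical
  set F : Matrix (Fin k) (Fin k) ℝ := Matrix.of fun i l : Fin k => iteratedDeriv (l:ℕ) (f i) t
  set B : Matrix (Fin k) (Fin k) ℝ := Matrix.of fun l j : Fin k =>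
    if (l:ℕ) ≤ (j:ℕ) then ((j:ℕ).choose (l:ℕ) : ℝ) * iteratedDeriv ((j:ℕ) - (l:ℕ)) g t else 0
  have hM : (Matrix.of fun i j : Fin k => iteratedDeriv (j:ℕ) (fun x => f i x * g x) t) = F * B := by
    ext i j
    rw [Matrix.mul_apply]
    have hL := myLeibniz hs (j:ℕ) (by omega) (f i) g (hf i) hg t ht
    rw [Matrix.of_apply, hL, Nat.sum_antidiagonal_eq_sum_range_succ_mk]
    have hsub : Finset.range ((j:ℕ)+1) ⊆ Finset.range k := by
      apply Finset.range_subset_range.2; omega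
    rw [Finset.sum_subset hsub (fun l hlk hl => ?_)]
    · rw [← Fin.sum_univ_eq_sum_range (fun l =>
        ((j:ℕ).choose l : ℝ) * (iteratedDeriv l (f i) t * iteratedDeriv ((j:ℕ) - l) g t))]
      refine Finset.sum_congr rfl fun l _ => ?_
      simp only [F, B, Matrix.of_apply]
      split_ifs with h
      · ring
      · rw [Nat.choose_eq_zero_of_lt (by omega)]
        simp
    · rw [Finset.mem_range] at hlk hl
      rw [Nat.choose_eq_zero_of_lt (by omega)]
      simp
  rw [hM, Matrix.det_mul]
  have hB : B.det = g t ^ k := by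
    rw [Matrix.det_of_upperTriangular (fun i j hij => ?_)]
    · have : ∀ l : Fin k, B l l = g t := by
        intro l
        simp only [B, Matrix.of_apply, if_pos le_rfl, Nat.choose_self, Nat.sub_self,
          Nat.cast_one, one_mul, iteratedDeriv_zero]
      rw [Finset.prod_congr rfl (fun l _ => this l), Finset.prod_const, Finset.card_univ,
        Fintype.card_fin]
    · simp only [id] at hij
      exact if_neg (by exact_mod_cast not_le.2 (show (j:ℕ) < (i:ℕ) from hij))
  rw [hB, mul_comm]

open Finset in
lemma myDetOne {k : ℕ} (f : Fin (k+1) → ℝ → ℝ) {t : ℝ}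
    (h0 : f 0 =ᶠ[𝓝 t] fun _ => (1:ℝ)) :
    (Matrix.of fun i j : Fin (k+1) => iteratedDeriv (j:ℕ) (f i) t).det
      = (Matrix.of fun i j : Fin k => iteratedDeriv (j:ℕ) (deriv (f i.succ)) t).det := by
  classical
  set M : Matrix (Fin (k+1)) (Fin (k+1)) ℝ :=
    Matrix.of fun i j : Fin (k+1) => iteratedDeriv (j:ℕ) (f i) t with hMdef
  have hrow : ∀ j : Fin (k+1), M 0 j = if j = 0 then 1 else 0 := by
    intro j
    have : iteratedDeriv (j:ℕ) (f 0) t = iteratedDeriv (j:ℕ) (fun _ => (1:ℝ)) t :=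
      h0.iteratedDeriv_eq (j:ℕ)
    simp only [M, Matrix.of_apply, this, myIdOne]
    congr 1
    rw [Fin.val_eq_zero_iff]
  rw [Matrix.det_succ_row_zero]
  rw [Finset.sum_eq_single 0 (fun j _ hj => by rw [hrow j, if_neg hj]; ring) (by simp)]
  rw [hrow 0, if_pos rfl]
  simp only [Fin.val_zero, pow_zero, one_mul, Fin.succAbove_zero]
  congr 1
  ext i j
  simp only [Matrix.submatrix_apply, M, Matrix.of_apply, Fin.val_succ]
  exact congrFun (iteratedDeriv_succ' (n := (j:ℕ)) (f := f i.succ)) t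

lemma myECT : ∀ (n : ℕ) (a b : ℝ) (u : Fin n → ℝ → ℝ),
    (∀ i, ContDiffOn ℝ (n-1 : ℕ) (u i) (Set.Ioo a b)) →
    (∀ t ∈ Set.Ioo a b, ∀ (k : ℕ) (hk : k ≤ n), 1 ≤ k →
      0 < (Matrix.of fun i j : Fin k =>
        iteratedDeriv (j:ℕ) (u (Fin.castLE hk i)) t).det) →
    ∀ (c : Fin n → ℝ) (x : Fin n → ℝ), StrictMono x → (∀ j, x j ∈ Set.Ioo a b) →
    (∀ j, ∑ i, c i * u i (x j) = 0) → c = 0 := by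
  intro n
  induction n with
  | zero => intro a b u _ _ c x _ _ _; funext i; exact i.elim0
  | succ n IH =>
    intro a b u hu hW c x hx hxm hf
    set s : Set ℝ := Set.Ioo a b with hs
    have hu' : ∀ i, ContDiffOn ℝ (n : ℕ) (u i) s := hu
    have hpos : ∀ t ∈ s, 0 < u 0 t := by
      intro t ht
      have h1 := hW t ht 1 (by omega) le_rfl
      rw [Matrix.det_fin_one] at h1
      simpa [iteratedDeriv_zero] using h1
    have hne : ∀ t ∈ s, ∀ᶠ y in 𝓝 t, u 0 y ≠ 0 := by
      intro t ht
      filter_upwards [isOpen_Ioo.mem_nhds ht] with y hy using (hpos y hy).ne'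
    set v : Fin (n+1) → ℝ → ℝ := fun i x => u i x / u 0 x with hvdef
    set w : Fin n → ℝ → ℝ := fun i => deriv (v i.succ) with hwdef
    have hv : ∀ i, ContDiffOn ℝ (n : ℕ) (v i) s :=
      fun i => (hu' i).div (hu' 0) fun y hy => (hpos y hy).ne'
    have hw : ∀ i : Fin n, ContDiffOn ℝ (n-1 : ℕ) (w i) s := by
      intro i
      refine (hv i.succ).deriv_of_isOpen isOpen_Ioo ?_
      have := i.pos
      exact_mod_cast Nat.cast_le.mpr (by omega : (n-1) + 1 ≤ n)
    have key : ∀ (k : ℕ) (hk : k + 1 ≤ n + 1) (t : ℝ), t ∈ s →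
        (Matrix.of fun i j : Fin (k+1) =>
          iteratedDeriv (j:ℕ) (u (Fin.castLE hk i)) t).det
          = u 0 t ^ (k+1) * (Matrix.of fun i j : Fin k =>
            iteratedDeriv (j:ℕ) (w (Fin.castLE (Nat.succ_le_succ_iff.mp hk) i)) t).det := by
      intro k hk t ht
      have hne' : ∀ᶠ y in 𝓝 t, u 0 y ≠ 0 := hne t ht
      have step1 : (Matrix.of fun i j : Fin (k+1) =>
          iteratedDeriv (j:ℕ) (u (Fin.castLE hk i)) t).det
          = (Matrix.of fun i j : Fin (k+1) =>
            iteratedDeriv (j:ℕ) (fun y => v (Fin.castLE hk i) y * u 0 y) t).det := by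
        congr 1
        ext i j
        refine Filter.EventuallyEq.iteratedDeriv_eq _ ?_
        filter_upwards [hne'] with y hy
        simp only [v]
        rw [div_mul_cancel₀ _ hy]
      have hev1 : (fun i : Fin (k+1) => v (Fin.castLE hk i)) 0 =ᶠ[nhds t] fun _ => (1:ℝ) := by
        have h00 : Fin.castLE hk (0 : Fin (k+1)) = (0 : Fin (n+1)) := rfl
        filter_upwards [hne'] with y hy
        simp only [h00, v]
        exact div_self hy
      have hmat : (Matrix.of fun i j : Fin k => iteratedDeriv (j:ℕ)
            (deriv ((fun i : Fin (k+1) => v (Fin.castLE hk i)) i.succ)) t)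
          = (Matrix.of fun i j : Fin k =>
            iteratedDeriv (j:ℕ) (w (Fin.castLE (Nat.succ_le_succ_iff.mp hk) i)) t) := by
        ext i j
        have hcast : Fin.castLE hk (Fin.succ i) =
            Fin.succ (Fin.castLE (Nat.succ_le_succ_iff.mp hk) i) := by
          apply Fin.ext; simp
        simp only [Matrix.of_apply, w, hcast]
      rw [step1, myDetMul isOpen_Ioo hk (u 0) (fun i => v (Fin.castLE hk i)) (hu' 0)
        (fun i => hv _) ht, myDetOne (fun i => v (Fin.castLE hk i)) hev1, hmat]
    have hW' : ∀ t ∈ s, ∀ (k : ℕ) (hk : k ≤ n), 1 ≤ k →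
        0 < (Matrix.of fun i j : Fin k =>
          iteratedDeriv (j:ℕ) (w (Fin.castLE hk i)) t).det := by
      intro t ht k hk hk1
      have h1 := hW t ht (k+1) (by omega) (by omega)
      rw [key k (by omega) t ht] at h1
      have hp := pow_pos (hpos t ht) (k+1)
      by_contra hcon
      push_neg at hcon
      have h2 := mul_nonpos_of_nonneg_of_nonpos hp.le hcon
      exact absurd h1 (not_lt.mpr h2)
    -- the function g = f / u 0 written as a combination of the v i
    set g : ℝ → ℝ := fun y => ∑ i, c i * v i y with hgdef
    have hg0 : ∀ j, g (x j) = 0 := by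
      intro j
      have : g (x j) = (∑ i, c i * u i (x j)) / u 0 (x j) := by
        rw [Finset.sum_div]
        exact Finset.sum_congr rfl fun i _ => (mul_div_assoc _ _ _).symm
      rw [this, hf j, zero_div]
    have hgc : ContinuousOn g s := by
      apply continuousOn_finset_sum
      intro i _
      exact ((hv i).continuousOn).const_smul (c i) |>.congr fun y _ => by
        simp [smul_eq_mul]
    -- Rolle between consecutive zeros
    have hrolle : ∀ j : Fin n, ∃ y ∈ Set.Ioo (x j.castSucc) (x j.succ), deriv g y = 0 := by
      intro j
      have hAB : x j.castSucc < x j.succ := hx (Fin.castSucc_lt_succ (i := j))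
      have hsub : Set.Icc (x j.castSucc) (x j.succ) ⊆ s := fun y hy =>
        ⟨lt_of_lt_of_le (hxm j.castSucc).1 hy.1, lt_of_le_of_lt hy.2 (hxm j.succ).2⟩
      exact exists_deriv_eq_zero hAB (hgc.mono hsub) (by rw [hg0, hg0])
    choose y hy1 hy2 using hrolle
    have hymem : ∀ j, y j ∈ s := by
      intro j
      exact ⟨lt_trans (hxm j.castSucc).1 (hy1 j).1, lt_trans (hy1 j).2 (hxm j.succ).2⟩
    have hymono : StrictMono y := by
      intro j j' hlt
      have h1 : y j < x j.succ := (hy1 j).2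
      have h2 : x j'.castSucc < y j' := (hy1 j').1
      have h3 : x j.succ ≤ x j'.castSucc := by
        apply hx.monotone
        rw [Fin.le_def]
        simp only [Fin.val_succ, Fin.coe_castSucc]
        exact Fin.lt_def.mp hlt
      linarith
    -- compute deriv g at the rolle points
    have hderiv : ∀ j : Fin n, ∑ i : Fin n, c i.succ * w i (y j) = 0 := by
      intro j
      have hn1 : (1 : WithTop ℕ∞) ≤ (n : ℕ) := by
        have := j.pos
        exact_mod_cast Nat.one_le_cast.mpr this
      have hvd : ∀ i, DifferentiableAt ℝ (v i) (y j) := by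
        intro i
        exact ((hv i).differentiableOn (by exact_mod_cast (show n ≠ 0 by have := j.pos; omega)) (y j) (hymem j)).differentiableAt
          (isOpen_Ioo.mem_nhds (hymem j))
      have hder : HasDerivAt g (∑ i, c i * deriv (v i) (y j)) (y j) :=
        HasDerivAt.fun_sum fun i _ => ((hvd i).hasDerivAt).const_mul (c i)
      have hdg : ∑ i, c i * deriv (v i) (y j) = 0 := by rw [← hder.deriv]; exact hy2 j
      have hv0 : deriv (v 0) (y j) = 0 := by
        have hev : v 0 =ᶠ[nhds (y j)] fun _ => (1:ℝ) := by
          filter_upwards [hne (y j) (hymem j)] with z hz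
          exact div_self hz
        rw [hev.deriv_eq, deriv_const]
      rw [Fin.sum_univ_succ] at hdg
      rw [hv0] at hdg
      rw [mul_zero, zero_add] at hdg
      exact hdg
    have hcs : (fun i : Fin n => c i.succ) = 0 :=
      IH a b w hw hW' (fun i => c i.succ) y hymono hymem hderiv
    have hc0 : c 0 = 0 := by
      have h0 := hf 0
      rw [Fin.sum_univ_succ] at h0
      have hz : ∀ i : Fin n, c i.succ * u i.succ (x 0) = 0 := by
        intro i
        have h := congrFun hcs i
        simp only [Pi.zero_apply] at h
        rw [h, zero_mul]
      rw [Finset.sum_congr rfl (fun i _ => hz i), Finset.sum_const, smul_zero,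
        add_zero] at h0
      have := (hpos (x 0) (hxm 0)).ne'
      exact (mul_eq_zero.mp h0).resolve_right this
    funext i
    refine Fin.cases ?_ ?_ i
    · exact hc0
    · intro i'
      have h := congrFun hcs i'
      simpa using h

lemma myProj {m : ℕ} {N : ℕ} {γ : ℝ → Fin m → ℝ} {s : Set ℝ} (hγ : ContDiffOn ℝ N γ s)
    (hs : UniqueDiffOn ℝ s) {t : ℝ} (ht : t ∈ s) {j : ℕ} (hj : j ≤ N) (i : Fin m) :
    iteratedDerivWithin j (fun x => γ x i) s t = iteratedDerivWithin j γ s t i := by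
  have h := (ContinuousLinearMap.proj (R := ℝ) (φ := fun _ : Fin m => ℝ)
    i).iteratedFDerivWithin_comp_left (hγ t ht) hs ht (i := j) (by exact_mod_cast hj)
  have h2 := congrArg (fun (T : ContinuousMultilinearMap ℝ (fun _ : Fin j => ℝ) ℝ) =>
    T (fun _ => (1:ℝ))) h
  simp only [ContinuousLinearMap.compContinuousMultilinearMap_coe, Function.comp_apply,
    ContinuousLinearMap.proj_apply] at h2
  rw [iteratedDerivWithin_eq_iteratedFDerivWithin, iteratedDerivWithin_eq_iteratedFDerivWithin]
  exact h2

theorem stmt1 (m : ℕ) (hm : 1 ≤ m) (a b : ℝ) (hab : a < b)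
    (β : ℝ → Fin m → ℝ) (hβ : HasTotallyPositiveTorsion m a b β)
    (z : Fin m → ℝ) (hz : StrictMono z) (hzmem : ∀ i, z i ∈ Set.Icc a b)
    (r : ℝ) (hr : r ∈ Set.Icc a b) (hrz : ∀ i, r ≠ z i) :
    LinearIndependent ℝ (fun i : Fin m => β (z i) - β r) := by
  classical
  obtain ⟨hcont, hsmooth, hW⟩ := hβ
  set s : Set ℝ := Set.Ioo a b with hsdef
  set u : Fin m → ℝ → ℝ := fun i => deriv (fun x => β x i) with hudef
  have hcomp : ∀ i : Fin m, ContDiffOn ℝ (m : ℕ) (fun x => β x i) s := fun i =>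
    (ContinuousLinearMap.proj (R := ℝ) (φ := fun _ : Fin m => ℝ)
      i).contDiff.comp_contDiffOn hsmooth
  have hu : ∀ i, ContDiffOn ℝ (m-1 : ℕ) (u i) s := by
    intro i
    refine (hcomp i).deriv_of_isOpen isOpen_Ioo ?_
    exact_mod_cast Nat.cast_le.mpr (by omega : (m-1)+1 ≤ m)
  have hW' : ∀ t ∈ s, ∀ (k : ℕ) (hk : k ≤ m), 1 ≤ k →
      0 < (Matrix.of fun i j : Fin k =>
        iteratedDeriv (j:ℕ) (u (Fin.castLE hk i)) t).det := by
    intro t ht k hk hk1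
    have h1 := hW t ht k hk hk1
    have hmat : (Matrix.of fun i j : Fin k =>
        iteratedDeriv (j:ℕ) (u (Fin.castLE hk i)) t)
        = Matrix.of (fun i j : Fin k =>
          iteratedDerivWithin (j.1+1) β s t (Fin.castLE hk i)) := by
      ext i j
      simp only [Matrix.of_apply, u]
      rw [← iteratedDeriv_succ' (n := (j:ℕ)) (f := fun x => β x (Fin.castLE hk i))]
      rw [← myIdwOpen (n := (j:ℕ)+1) isOpen_Ioo ht]
      exact myProj hsmooth isOpen_Ioo.uniqueDiffOn ht (by omega : (j:ℕ)+1 ≤ m) _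
    rw [hmat]
    exact h1
  set A : Matrix (Fin m) (Fin m) ℝ := Matrix.of fun i l => β (z i) l - β r l with hAdef
  suffices hdet : A.det ≠ 0 by
    rw [Fintype.linearIndependent_iff]
    intro g hg
    have hvm : Matrix.vecMul g A = 0 := by
      funext l
      have h := congrFun hg l
      simp only [Finset.sum_apply, Pi.smul_apply, Pi.sub_apply, smul_eq_mul,
        Pi.zero_apply] at h
      simpa [Matrix.vecMul, dotProduct, A] using h
    intro i0
    by_contra hgi
    have hgne : g ≠ 0 := fun h => hgi (by rw [h]; rfl)
    exact hdet (Matrix.exists_vecMul_eq_zero_iff.mp ⟨g, hgne, hvm⟩)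
  intro hdet0
  obtain ⟨c, hc0, hmv⟩ := Matrix.exists_mulVec_eq_zero_iff.mpr hdet0
  set F : ℝ → ℝ := fun x => ∑ l, c l * β x l with hFdef
  have hFz : ∀ i, F (z i) = F r := by
    intro i
    have h := congrFun hmv i
    simp only [Matrix.mulVec, dotProduct, A, Matrix.of_apply, Pi.zero_apply] at h
    have h2 : F (z i) - F r = ∑ l, (β (z i) l - β r l) * c l := by
      rw [hFdef]
      simp only
      rw [← Finset.sum_sub_distrib]
      exact Finset.sum_congr rfl fun l _ => by ring
    have := h2.trans h
    linarith
  set W : Finset ℝ := insert r (Finset.image z Finset.univ) with hWdef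
  have hrnotmem : r ∉ Finset.image z Finset.univ := by
    simp only [Finset.mem_image]
    rintro ⟨i, -, hi⟩
    exact hrz i hi.symm
  have hcard : W.card = m + 1 := by
    rw [hWdef, Finset.card_insert_of_notMem hrnotmem,
      Finset.card_image_of_injective _ hz.injective, Finset.card_univ, Fintype.card_fin]
  set p : Fin (m+1) → ℝ := fun j => W.orderEmbOfFin hcard j with hpdef
  have hpmono : StrictMono p := (W.orderEmbOfFin hcard).strictMono
  have hpW : ∀ j, p j ∈ W := fun j => Finset.orderEmbOfFin_mem W hcard j
  have hpmem : ∀ j, p j ∈ Set.Icc a b := by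
    intro j
    have h := hpW j
    rw [hWdef, Finset.mem_insert] at h
    rcases h with h | h
    · rw [h]; exact hr
    · obtain ⟨i, -, hi⟩ := Finset.mem_image.mp h
      rw [← hi]; exact hzmem i
  have hFW : ∀ q ∈ W, F q = F r := by
    intro q hq
    rw [hWdef, Finset.mem_insert] at hq
    rcases hq with h | h
    · rw [h]
    · obtain ⟨i, -, hi⟩ := Finset.mem_image.mp h
      rw [← hi]; exact hFz i
  have hFc : ContinuousOn F (Set.Icc a b) := by
    apply continuousOn_finset_sum
    intro l _
    exact (((continuous_apply l).comp_continuousOn hcont).const_smul (c l)).congr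
      fun y _ => by simp [smul_eq_mul]
  have hrolle : ∀ j : Fin m, ∃ y ∈ Set.Ioo (p j.castSucc) (p j.succ), deriv F y = 0 := by
    intro j
    refine exists_deriv_eq_zero (hpmono (Fin.castSucc_lt_succ (i := j)))
      (hFc.mono (Set.Icc_subset_Icc (hpmem j.castSucc).1 (hpmem j.succ).2)) ?_
    rw [hFW _ (hpW j.castSucc), hFW _ (hpW j.succ)]
  choose y hy1 hy2 using hrolle
  have hymem : ∀ j, y j ∈ s := fun j =>
    ⟨lt_of_le_of_lt (hpmem j.castSucc).1 (hy1 j).1,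
      lt_of_lt_of_le (hy1 j).2 (hpmem j.succ).2⟩
  have hymono : StrictMono y := by
    intro j j' hlt
    have h1 : y j < p j.succ := (hy1 j).2
    have h2 : p j'.castSucc < y j' := (hy1 j').1
    have h3 : p j.succ ≤ p j'.castSucc := by
      apply hpmono.monotone
      rw [Fin.le_def]
      simp only [Fin.val_succ, Fin.coe_castSucc]
      exact Fin.lt_def.mp hlt
    linarith
  have hfy : ∀ j, ∑ l, c l * u l (y j) = 0 := by
    intro j
    have hd : ∀ l : Fin m, DifferentiableAt ℝ (fun x => β x l) (y j) := by
      intro l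
      refine (((hcomp l).differentiableOn ?_) (y j) (hymem j)).differentiableAt
        (isOpen_Ioo.mem_nhds (hymem j))
      exact_mod_cast (show m ≠ 0 by omega)
    have hder : HasDerivAt F (∑ l, c l * u l (y j)) (y j) :=
      HasDerivAt.fun_sum fun l _ => ((hd l).hasDerivAt).const_mul (c l)
    rw [← hder.deriv]
    exact hy2 j
  exact hc0 (myECT m a b u hu hW' c y hymono hymem hfy)

end
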